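/- The only totally real preperiodic points of f(x) = x² + 1/4 are 1/2 and -1/2. -/
import Mathlib

private lemma iter_coe (k : ℕ) (r : ℝ) :
    (fun x : ℂ => x^2 + 1/4)^[k] (r : ℂ)
      = (((fun x : ℝ => x^2 + 1/4)^[k] r : ℝ) : ℂ) := by
  induction k with
  | zero => simp
  | succ k ih =>
      rw [Function.iterate_succ_apply', Function.iterate_succ_apply', ih]
      push_cast
      ring

private lemma back_orbit (k : ℕ) : ∀ r : ℝ,
    (fun x : ℝ => x^2 + 1/4)^[k] r = 1/2 → r = 1/2 ∨ r = -1/2 := by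
  induction k with
  | zero => intro r h; left; simpa using h
  | succ k ih =>
      intro r h
      rw [Function.iterate_succ_apply] at h
      rcases ih _ h with h1 | h1
      · have : (r - 1/2) * (r + 1/2) = 0 := by nlinarith
        rcases mul_eq_zero.1 this with h2 | h2
        · left; linarith
        · right; linarith
      · exfalso
        nlinarith [sq_nonneg r]

theorem stmt_16 (α : ℂ) (halg : IsAlgebraic ℚ α) :
    ((∃ m n : ℕ, m < n ∧
        (fun x : ℂ => x^2 + 1/4)^[n] α = (fun x : ℂ => x^2 + 1/4)^[m] α) ∧
      (∀ z : ℂ, Polynomial.aeval z (minpoly ℚ α) = 0 → ∃ r : ℝ, z = (r : ℂ)))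
    ↔ α ∈ ({1/2, -1/2} : Set ℂ) := by
  constructor
  · rintro ⟨⟨m, n, hmn, hiter⟩, hreal⟩
    obtain ⟨r, hr⟩ := hreal α (minpoly.aeval ℚ α)
    subst hr
    rw [iter_coe, iter_coe] at hiter
    have hiterR : (fun x : ℝ => x^2 + 1/4)^[n] r = (fun x : ℝ => x^2 + 1/4)^[m] r :=
      Complex.ofReal_inj.1 hiter
    set a : ℕ → ℝ := fun k => (fun x : ℝ => x^2 + 1/4)^[k] r with ha
    have hmono : Monotone a := by
      apply monotone_nat_of_le_succ
      intro k
      have : a (k+1) = (a k)^2 + 1/4 := by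
        simp only [ha, Function.iterate_succ_apply']
      rw [this]
      nlinarith [sq_nonneg (a k - 1/2)]
    have heq : a (m+1) = a m := le_antisymm
      (by calc a (m+1) ≤ a n := hmono hmn
           _ = a m := hiterR)
      (hmono (Nat.le_succ m))
    have hfix : (a m)^2 + 1/4 = a m := by
      have : a (m+1) = (a m)^2 + 1/4 := by
        simp only [ha, Function.iterate_succ_apply']
      linarith [this ▸ heq]
    have ham : a m = 1/2 := by nlinarith [sq_nonneg (a m - 1/2)]
    rcases back_orbit m r ham with h | h <;> simp [Set.mem_insert_iff, h]
  · intro hα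
    simp only [Set.mem_insert_iff, Set.mem_singleton_iff] at hα
    rcases hα with hα | hα
    all_goals constructor
    · exact ⟨0, 1, Nat.zero_lt_one, by simp [hα]; norm_num⟩
    · intro z hz
      have : α = ((1/2 : ℚ) : ℂ) := by rw [hα]; norm_num
      rw [this] at hz
      have hmp : minpoly ℚ ((1/2 : ℚ) : ℂ) = Polynomial.X - Polynomial.C (1/2 : ℚ) := by
        have := minpoly.eq_X_sub_C ℂ (1/2 : ℚ)
        simpa using this
      rw [hmp] at hz
      simp at hz
      have h2 := sub_eq_zero.1 (by linear_combination hz : z - (1/2:ℂ) = 0)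
      exact ⟨1/2, by rw [h2]; norm_num⟩
    · refine ⟨1, 2, Nat.one_lt_two, ?_⟩
      simp [hα]; norm_num
    · intro z hz
      have : α = ((-1/2 : ℚ) : ℂ) := by rw [hα]; norm_num
      rw [this] at hz
      have hmp : minpoly ℚ ((-1/2 : ℚ) : ℂ) = Polynomial.X - Polynomial.C (-1/2 : ℚ) := by
        have := minpoly.eq_X_sub_C ℂ (-1/2 : ℚ)
        simpa using this
      rw [hmp] at hz
      simp at hz
      have h2 := sub_eq_zero.1 (by linear_combination hz : z - (-1/2:ℂ) = 0)
      exact ⟨-1/2, by rw [h2]; norm_num⟩
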